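/- If m is a basic tuple of p partitions of n with idx(m) ≤ 0, then p ≥ 3. -/

import Mathlib

/-- The index of rigidity of a tuple of `p` partitions of `n`. -/
def idx (p n : ℕ) (m : Fin p → List ℕ) : ℤ :=
  2 * (n : ℤ) ^ 2 - ∑ j : Fin p, ((n : ℤ) ^ 2 - ((m j).map (fun x => (x : ℤ) ^ 2)).sum)

/-- A basic tuple of `p` partitions of `n` with `idx m ≤ 0` has at least 3 partitions. -/
theorem three_le_of_basic (p n : ℕ) (hn : 0 < n) (m : Fin p → List ℕ)
    (hmono : ∀ j, (m j).Pairwise (· ≥ ·))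
    (hpos : ∀ j, ∀ x ∈ m j, 0 < x)
    (hsum : ∀ j, (m j).sum = n)
    (hlen : ∀ j, 2 ≤ (m j).length)
    (hbasic : 2 * (n : ℤ) ≤ ∑ j : Fin p, ((n : ℤ) - ((m j).headI : ℤ)))
    (hidx : idx p n m ≤ 0) :
    3 ≤ p := by
  by_contra h
  push_neg at h
  have hp2 : p ≤ 2 := Nat.lt_succ_iff.mp h
  have hterm : ∀ j : Fin p, ((n : ℤ) - ((m j).headI : ℤ)) ≤ (n : ℤ) - 1 := by
    intro j
    have hne : m j ≠ [] := by
      intro hnil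
      have := hlen j
      rw [hnil] at this
      simp at this
    have hmem : (m j).headI ∈ m j := by
      obtain ⟨a, t, heq⟩ := List.exists_cons_of_ne_nil hne
      rw [heq]; simp
    have h1 : 1 ≤ (m j).headI := hpos j _ hmem
    have : (1 : ℤ) ≤ ((m j).headI : ℤ) := by exact_mod_cast h1
    linarith
  have hsum' : (∑ j : Fin p, ((n : ℤ) - ((m j).headI : ℤ))) ≤ p * ((n : ℤ) - 1) := by
    calc (∑ j : Fin p, ((n : ℤ) - ((m j).headI : ℤ)))
        ≤ ∑ _j : Fin p, ((n : ℤ) - 1) := Finset.sum_le_sum fun j _ => hterm j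
      _ = p * ((n : ℤ) - 1) := by simp [Finset.sum_const, mul_comm]; ring
  have hp2' : (p : ℤ) ≤ 2 := by exact_mod_cast hp2
  have hn1 : (1 : ℤ) ≤ (n : ℤ) := by exact_mod_cast hn
  nlinarith
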